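/- arXiv:1402.2113 — 2 statements merged into one kernel-verified Lean document; each statement's English description precedes it below -/
import Mathlib

section
/- Let $X : [0,t] \to \mathbb{R}$ be a càdlàg function such that $\sum_{0 \le s \le t} (\Delta X_s)^2 = \infty$, where $\Delta X_s = X_s - X_{s-}$ denotes the jump of $X$ at $s$ (with $\Delta X_0 = 0$). Then for every sequence $(\mathcal{P}_n)_{n \in \mathbb{N}}$ of partitions $0 = \rho_0^{(n)} < \rho_1^{(n)} < \dots < \rho_{l^{(n)}}^{(n)} = t$ of $[0,t]$ whose mesh size tends to $0$, one has $\lim_{n \to \infty} \sum_{j=1}^{l^{(n)}} \big(X_{\rho_j^{(n)}} - X_{\rho_{j-1}^{(n)}}\big)^2 = \infty$. -/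
open Filter Topology

/-- If a càdlàg function `X` on `[0,t]` has infinite sum of squared jumps, then along any
sequence of partitions of `[0,t]` with mesh tending to zero the sums of squared increments
tend to infinity. `Xl` denotes the left-limit function, with `Xl 0 = X 0` (so `ΔX_0 = 0`). -/
theorem infinite_squared_jumps_implies_infinite_quadratic_variation
    (t : ℝ) (ht : 0 < t) (X Xl : ℝ → ℝ)
    (hright : ∀ u : ℝ, Tendsto X (nhdsWithin u (Set.Ici u)) (nhds (X u)))
    (hleft : ∀ u : ℝ, Tendsto X (nhdsWithin u (Set.Iio u)) (nhds (Xl u)))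
    (h0 : Xl 0 = X 0)
    (hjumps : ∑' u : Set.Icc (0 : ℝ) t, ENNReal.ofReal ((X u - Xl u) ^ 2) = ⊤)
    (l : ℕ → ℕ) (ρ : ℕ → ℕ → ℝ)
    (hl : ∀ n, 1 ≤ l n)
    (h0n : ∀ n, ρ n 0 = 0) (htn : ∀ n, ρ n (l n) = t)
    (hmono : ∀ n, ∀ j < l n, ρ n j < ρ n (j + 1))
    (hmesh : ∀ ε > (0 : ℝ), ∃ N, ∀ n ≥ N, ∀ j < l n, ρ n (j + 1) - ρ n j < ε) :
    Tendsto (fun n => ∑ j ∈ Finset.range (l n), (X (ρ n (j + 1)) - X (ρ n j)) ^ 2)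
      atTop atTop := by
  classical
  rw [tendsto_atTop]
  intro M
  -- find a finite set of jump times with large sum of squared jumps
  obtain ⟨F, hF⟩ : ∃ F : Finset (Set.Icc (0:ℝ) t),
      ENNReal.ofReal (4 * |M| + 1) < ∑ u ∈ F, ENNReal.ofReal ((X u - Xl u) ^ 2) := by
    have h1 : (ENNReal.ofReal (4 * |M| + 1)) <
        ∑' u : Set.Icc (0:ℝ) t, ENNReal.ofReal ((X u - Xl u) ^ 2) := by
      rw [hjumps]; exact ENNReal.ofReal_lt_top
    rw [ENNReal.tsum_eq_iSup_sum] at h1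
    exact lt_iSup_iff.1 h1
  have hFsum : 4 * |M| + 1 < ∑ u ∈ F, (X (u:ℝ) - Xl (u:ℝ)) ^ 2 := by
    rwa [← ENNReal.ofReal_sum_of_nonneg (fun u _ => sq_nonneg _),
      ENNReal.ofReal_lt_ofReal_iff_of_nonneg (by positivity)] at hF
  set G : Finset ℝ := (F.image Subtype.val).filter fun u => X u - Xl u ≠ 0 with hG
  have hGsum : 4 * |M| + 1 < ∑ u ∈ G, (X u - Xl u) ^ 2 := by
    rw [hG, Finset.sum_filter_of_ne, Finset.sum_image (fun a _ b _ h => Subtype.ext h)]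
    · exact hFsum
    · intro x _ hfx h
      exact hfx (by rw [h]; ring)
  have hGmem : ∀ u ∈ G, 0 < u ∧ u ≤ t ∧ X u - Xl u ≠ 0 := by
    intro u hu
    rw [hG, Finset.mem_filter, Finset.mem_image] at hu
    obtain ⟨⟨v, _, rfl⟩, hne⟩ := hu
    refine ⟨?_, (Set.mem_Icc.mp v.2).2, hne⟩
    rcases lt_or_eq_of_le (Set.mem_Icc.mp v.2).1 with h | h
    · exact h
    · exact absurd (by rw [← h, h0]; ring) hne
  have hGne : G.Nonempty := by
    by_contra h
    rw [Finset.not_nonempty_iff_eq_empty] at h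
    rw [h, Finset.sum_empty] at hGsum
    have : (0:ℝ) ≤ |M| := abs_nonneg M
    linarith
  -- minimum gap between distinct points of G
  have hmemfil : ∀ u ∈ G, ∀ v ∈ G, u ≠ v →
      (u, v) ∈ (G ×ˢ G).filter fun p => p.1 ≠ p.2 := by
    intro u hu v hv huv
    rw [Finset.mem_filter, Finset.mem_product]
    exact ⟨⟨hu, hv⟩, huv⟩
  obtain ⟨g, hg0, hgap⟩ : ∃ g > (0:ℝ), ∀ u ∈ G, ∀ v ∈ G, u ≠ v → g ≤ |u - v| := by
    by_cases hP : ((G ×ˢ G).filter fun p => p.1 ≠ p.2).Nonempty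
    · refine ⟨((G ×ˢ G).filter fun p => p.1 ≠ p.2).inf' hP (fun p => |p.1 - p.2|), ?_, ?_⟩
      · rw [gt_iff_lt, Finset.lt_inf'_iff]
        intro p hp
        rw [Finset.mem_filter] at hp
        exact abs_pos.2 (sub_ne_zero.2 hp.2)
      · intro u hu v hv huv
        exact Finset.inf'_le _ (hmemfil u hu v hv huv)
    · exact ⟨1, one_pos, fun u hu v hv huv =>
        absurd ⟨(u,v), hmemfil u hu v hv huv⟩ hP⟩
  -- per-point delta so that increments over small straddling intervals are big
  have key : ∀ u : ℝ, ∃ δ > (0:ℝ), X u - Xl u ≠ 0 →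
      ∀ a b : ℝ, u - δ < a → a < u → u ≤ b → b < u + δ →
      (X u - Xl u) ^ 2 / 4 ≤ (X b - X a) ^ 2 := by
    intro u
    by_cases hdu : X u - Xl u ≠ 0
    · have hε : (0:ℝ) < |X u - Xl u| / 4 := by positivity
      obtain ⟨δ1, hδ1, h1⟩ := Metric.tendsto_nhdsWithin_nhds.1 (hleft u) _ hε
      obtain ⟨δ2, hδ2, h2⟩ := Metric.tendsto_nhdsWithin_nhds.1 (hright u) _ hε
      refine ⟨min δ1 δ2, lt_min hδ1 hδ2, fun _ a b ha1 ha2 hb1 hb2 => ?_⟩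
      have hda : dist a u < δ1 := by
        rw [Real.dist_eq, abs_of_neg (by linarith : a - u < 0)]
        have := min_le_left δ1 δ2
        linarith
      have hdb : dist b u < δ2 := by
        rw [Real.dist_eq, abs_of_nonneg (by linarith : (0:ℝ) ≤ b - u)]
        have := min_le_right δ1 δ2
        linarith
      have hXa : |X a - Xl u| < |X u - Xl u| / 4 := by
        have := h1 (Set.mem_Iio.2 ha2) hda
        rwa [Real.dist_eq] at this
      have hXb : |X b - X u| < |X u - Xl u| / 4 := by
        have := h2 (Set.mem_Ici.2 hb1) hdb
        rwa [Real.dist_eq] at this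
      have hdiff : |X b - X a - (X u - Xl u)| < |X u - Xl u| / 2 := by
        have heq : X b - X a - (X u - Xl u) = (X b - X u) + (-(X a - Xl u)) := by ring
        calc |X b - X a - (X u - Xl u)| ≤ |X b - X u| + |-(X a - Xl u)| := by
              rw [heq]; exact abs_add_le _ _
          _ = |X b - X u| + |X a - Xl u| := by rw [abs_neg]
          _ < |X u - Xl u| / 2 := by linarith
      have habs : |X u - Xl u| / 2 ≤ |X b - X a| := by
        have h3 : |X u - Xl u| - |X b - X a| ≤ |X u - Xl u - (X b - X a)| :=
          abs_sub_abs_le_abs_sub _ _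
        have h4 : |X u - Xl u - (X b - X a)| = |X b - X a - (X u - Xl u)| := abs_sub_comm _ _
        linarith
      calc (X u - Xl u) ^ 2 / 4 = (|X u - Xl u| / 2) ^ 2 := by
            rw [div_pow, sq_abs]; ring
        _ ≤ |X b - X a| ^ 2 := by
            apply pow_le_pow_left₀ (by positivity) habs
        _ = (X b - X a) ^ 2 := sq_abs _
    · exact ⟨1, one_pos, fun h => absurd h hdu⟩
  choose δ hδpos hδ using key
  set ε : ℝ := min g (G.inf' hGne δ) with hε
  have hεpos : 0 < ε := lt_min hg0 ((Finset.lt_inf'_iff hGne).2 fun u _ => hδpos u)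
  obtain ⟨N, hN⟩ := hmesh ε hεpos
  rw [eventually_atTop]
  refine ⟨N, fun n hn => ?_⟩
  -- for each jump point find the straddling partition interval
  have hex : ∀ u ∈ G, ∃ j, j < l n ∧ ρ n j < u ∧ u ≤ ρ n (j+1) := by
    intro u hu
    obtain ⟨hu0, hut, -⟩ := hGmem u hu
    have hwit : u ≤ ρ n ((l n - 1) + 1) := by
      rw [Nat.sub_add_cancel (hl n), htn n]; exact hut
    have hw : ∃ j, u ≤ ρ n (j + 1) := ⟨l n - 1, hwit⟩
    refine ⟨Nat.find hw, ?_, ?_, Nat.find_spec hw⟩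
    · have h1 : Nat.find hw ≤ l n - 1 := Nat.find_le hwit
      have h2 := hl n
      omega
    · cases hj : Nat.find hw with
      | zero => rw [h0n n]; exact hu0
      | succ m =>
        have hm := Nat.find_min hw (by omega : m < Nat.find hw)
        exact not_le.1 hm
  choose jm hjlt hjlo hjhi using hex
  -- increments over straddling intervals are big
  have hbound : ∀ u : {x // x ∈ G},
      (X (u:ℝ) - Xl (u:ℝ)) ^ 2 / 4 ≤
        (X (ρ n (jm u u.2 + 1)) - X (ρ n (jm u u.2))) ^ 2 := by
    intro u
    have h1 := hjlo u u.2
    have h2 := hjhi u u.2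
    have hm := hN n hn _ (hjlt u u.2)
    have hδu : ε ≤ δ u := (min_le_right _ _).trans (Finset.inf'_le _ u.2)
    exact hδ (u:ℝ) (hGmem u u.2).2.2 _ _ (by linarith) h1 h2 (by linarith)
  have hinj : ∀ u ∈ G.attach, ∀ v ∈ G.attach,
      jm u.1 u.2 = jm v.1 v.2 → u = v := by
    intro u _ v _ h
    by_contra hne
    have hvals : (u:ℝ) ≠ v := fun hh => hne (Subtype.ext hh)
    have hg' := hgap u u.2 v v.2 hvals
    have h1 := hjlo u u.2
    have h2 := hjhi u u.2
    have h3 := hjlo v v.2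
    have h4 := hjhi v v.2
    rw [h] at h1 h2
    have hm := hN n hn _ (hjlt v v.2)
    have habs : |(u:ℝ) - v| < ε := by
      rw [abs_lt]
      constructor <;> linarith
    have hεg : ε ≤ g := min_le_left _ _
    linarith
  have hsub : G.attach.image (fun u => jm u.1 u.2) ⊆ Finset.range (l n) := by
    intro j hj
    rw [Finset.mem_image] at hj
    obtain ⟨u, _, rfl⟩ := hj
    exact Finset.mem_range.2 (hjlt u u.2)
  have final : (∑ u ∈ G, (X u - Xl u) ^ 2) / 4 ≤
      ∑ j ∈ Finset.range (l n), (X (ρ n (j + 1)) - X (ρ n j)) ^ 2 := by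
    calc (∑ u ∈ G, (X u - Xl u) ^ 2) / 4
        = ∑ u ∈ G, (X u - Xl u) ^ 2 / 4 := Finset.sum_div _ _ _
      _ = ∑ u ∈ G.attach, (X (u:ℝ) - Xl (u:ℝ)) ^ 2 / 4 := (Finset.sum_attach _ _).symm
      _ ≤ ∑ u ∈ G.attach, (X (ρ n (jm u.1 u.2 + 1)) - X (ρ n (jm u.1 u.2))) ^ 2 :=
          Finset.sum_le_sum (fun u _ => hbound u)
      _ = ∑ j ∈ G.attach.image (fun u => jm u.1 u.2),
            (X (ρ n (j + 1)) - X (ρ n j)) ^ 2 := by rw [Finset.sum_image hinj]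
      _ ≤ ∑ j ∈ Finset.range (l n), (X (ρ n (j + 1)) - X (ρ n j)) ^ 2 :=
          Finset.sum_le_sum_of_subset_of_nonneg hsub (fun _ _ _ => sq_nonneg _)
  have hM : M ≤ |M| := le_abs_self M
  linarith
end

section
/- Let $M_k$, $k \ge 2$, be independent random variables with $M_k$ Poisson distributed with parameter $(k-1)(t-s)$ for fixed $t > s$, and let $(T_{ik})_{i \ge 1, k \ge 2}$ be independent random variables, independent of $(M_k)$, where each $T_{ik}$ is distributed as the sum of independent exponentials with rates $\binom{j}{2}$, $j \ge k$. Then $\sum_{k=2}^{\infty} \sum_{i=1}^{M_k} T_{ik}^2 = \infty$ almost surely. -/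
open MeasureTheory ProbabilityTheory Filter Topology Set Real
open scoped ENNReal NNReal

namespace SSLL




open Classical in
/-- number of `j ∈ s` such that `ω ∈ B j` -/
noncomputable def cnt {Ω α : Type*} (s : Finset α) (B : α → Set Ω) (ω : Ω) : ℕ :=
  ∑ j ∈ s, if ω ∈ B j then 1 else 0

open Classical in
lemma cnt_eq_card {Ω α : Type*} (s : Finset α) (B : α → Set Ω) (ω : Ω) :
    cnt s B ω = (s.filter (fun j => ω ∈ B j)).card := by
  rw [cnt, Finset.card_filter]

lemma setOf_cnt_ge {Ω α : Type*} (s : Finset α) (B : α → Set Ω) (c : ℕ) :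
    {ω | c ≤ cnt s B ω}
      = ⋃ A ∈ Finset.filter (fun A : Finset α => A.card = c) s.powerset, ⋂ j ∈ A, B j := by
  classical
  ext ω
  simp only [Set.mem_setOf_eq, Set.mem_iUnion, Set.mem_iInter, Finset.mem_filter,
    Finset.mem_powerset]
  constructor
  · intro h
    rw [cnt_eq_card] at h
    obtain ⟨A, hAsub, hAcard⟩ := Finset.exists_subset_card_eq h
    exact ⟨A, ⟨hAsub.trans (Finset.filter_subset _ _), hAcard⟩,
      fun j hj => (Finset.mem_filter.mp (hAsub hj)).2⟩
  · rintro ⟨A, ⟨hAsub, hAcard⟩, hA⟩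
    rw [cnt_eq_card]
    calc c = A.card := hAcard.symm
    _ ≤ _ := Finset.card_le_card (fun j hj => Finset.mem_filter.mpr ⟨hAsub hj, hA j hj⟩)

lemma measurableSet_cnt_ge {Ω α : Type*} {m : MeasurableSpace Ω} (s : Finset α) (B : α → Set Ω)
    (hB : ∀ j ∈ s, MeasurableSet[m] (B j)) (c : ℕ) :
    MeasurableSet[m] {ω | c ≤ cnt s B ω} := by
  classical
  rw [setOf_cnt_ge]
  refine Finset.measurableSet_biUnion _ (fun A hA => ?_)
  obtain ⟨hAsub, -⟩ := Finset.mem_filter.mp hA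
  exact Finset.measurableSet_biInter _ (fun j hj => hB j (Finset.mem_powerset.mp hAsub hj))

/-- Markov's inequality for counts. -/
lemma meas_cnt_ge_le {Ω α : Type*} {m : MeasurableSpace Ω} {μ : Measure Ω} (s : Finset α)
    (B : α → Set Ω) (hB : ∀ j ∈ s, MeasurableSet (B j)) {c : ℕ} (hc : c ≠ 0) :
    μ {ω | c ≤ cnt s B ω} ≤ (∑ j ∈ s, μ (B j)) / c := by
  classical
  set g : Ω → ℝ≥0∞ := fun ω => ∑ j ∈ s, (B j).indicator (fun _ => 1) ω with hg
  have hgm : Measurable g := by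
    refine Finset.measurable_sum _ (fun j hj => ?_)
    exact measurable_const.indicator (hB j hj)
  have hsub : {ω | c ≤ cnt s B ω} ⊆ {ω | (c : ℝ≥0∞) ≤ g ω} := by
    intro ω hω
    have : g ω = (cnt s B ω : ℝ≥0∞) := by
      rw [hg, cnt]
      push_cast
      refine Finset.sum_congr rfl (fun j hj => ?_)
      by_cases h : ω ∈ B j <;> simp [Set.indicator, h]
    simp only [Set.mem_setOf_eq, this]
    exact_mod_cast Nat.cast_le.mpr hω
  calc μ {ω | c ≤ cnt s B ω} ≤ μ {ω | (c : ℝ≥0∞) ≤ g ω} := measure_mono hsub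
  _ ≤ (∫⁻ ω, g ω ∂μ) / c := by
      refine meas_ge_le_lintegral_div hgm.aemeasurable ?_ ?_
      · exact_mod_cast Nat.cast_ne_zero.mpr hc
      · exact ENNReal.natCast_ne_top c
  _ = (∑ j ∈ s, μ (B j)) / c := by
      congr 1
      rw [hg, lintegral_finset_sum _ (fun j hj => measurable_const.indicator (hB j hj))]
      exact Finset.sum_congr rfl (fun j hj => lintegral_indicator_one (hB j hj))

lemma cnt_add_cnt_compl {Ω α : Type*} (s : Finset α) (B : α → Set Ω) (ω : Ω) :
    cnt s B ω + cnt s (fun j => (B j)ᶜ) ω = s.card := by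
  classical
  rw [cnt, cnt, ← Finset.sum_add_distrib]
  rw [Finset.card_eq_sum_ones]
  refine Finset.sum_congr rfl (fun j hj => ?_)
  by_cases h : ω ∈ B j <;> simp [h]

/-- if the good count is `< c`, the bad count is `≥ s.card - c + 1`. -/
lemma compl_cnt_ge_subset {Ω α : Type*} (s : Finset α) (B : α → Set Ω) {c : ℕ} (hcs : c ≤ s.card) :
    {ω | c ≤ cnt s B ω}ᶜ ⊆ {ω | s.card - c + 1 ≤ cnt s (fun j => (B j)ᶜ) ω} := by
  intro ω hω
  simp only [Set.mem_compl_iff, Set.mem_setOf_eq, not_le] at hω ⊢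
  have h := cnt_add_cnt_compl s B ω
  omega





lemma exponentialPDF_eq_gammaPDF (r : ℝ) : exponentialPDF r = gammaPDF 1 r := rfl

lemma expMeasure_Iic {r : ℝ} (hr : 0 < r) (x : ℝ) :
    expMeasure r (Iic x) = ENNReal.ofReal (if 0 ≤ x then 1 - Real.exp (-(r*x)) else 0) := by
  rw [expMeasure, gammaMeasure, withDensity_apply _ measurableSet_Iic,
    ← exponentialPDF_eq_gammaPDF]
  exact lintegral_exponentialPDF_eq_antiDeriv hr x

lemma expMeasure_Iio_zero {r : ℝ} : expMeasure r (Iio 0) = 0 := by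
  rw [expMeasure, gammaMeasure, withDensity_apply _ measurableSet_Iio,
    ← exponentialPDF_eq_gammaPDF]
  exact lintegral_exponentialPDF_of_nonpos le_rfl

lemma expMeasure_Iio_le {r : ℝ} (hr : 0 < r) {x : ℝ} (hx : 0 ≤ x) :
    expMeasure r (Iio x) ≤ ENNReal.ofReal (1 - Real.exp (-(r*x))) := by
  refine (measure_mono Iio_subset_Iic_self).trans (le_of_eq ?_)
  rw [expMeasure_Iic hr, if_pos hx]

lemma expMeasure_Ioi {r : ℝ} (hr : 0 < r) {x : ℝ} (hx : 0 ≤ x) :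
    expMeasure r (Ioi x) = ENNReal.ofReal (Real.exp (-(r*x))) := by
  have : IsProbabilityMeasure (expMeasure r) := isProbabilityMeasure_expMeasure hr
  have hc : Ioi x = (Iic x)ᶜ := compl_Iic.symm
  rw [hc, measure_compl measurableSet_Iic (measure_ne_top _ _), measure_univ,
    expMeasure_Iic hr, if_pos hx]
  rw [← ENNReal.ofReal_one, ← ENNReal.ofReal_sub _ (sub_nonneg.mpr (Real.exp_le_one_iff.mpr (neg_nonpos.mpr (by positivity))))]
  norm_num

lemma lintegral_ofReal_expMeasure {r : ℝ} (hr : 0 < r) :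
    ∫⁻ x, ENNReal.ofReal x ∂(expMeasure r) ≤ ENNReal.ofReal (2 / r) := by
  have : IsProbabilityMeasure (expMeasure r) := isProbabilityMeasure_expMeasure hr
  set q : ℝ≥0∞ := ENNReal.ofReal (Real.exp (-1)) with hq
  -- pointwise bound
  have h1 : ∀ x : ℝ, ENNReal.ofReal (r * x)
      ≤ ∑' n : ℕ, (Ioi ((n:ℝ)/r)).indicator (1 : ℝ → ℝ≥0∞) x := by
    intro x
    rcases le_or_gt x 0 with hx | hx
    · rw [ENNReal.ofReal_eq_zero.mpr (by nlinarith)]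
      exact zero_le
    · calc ENNReal.ofReal (r * x) ≤ ((⌈r * x⌉₊ : ℕ) : ℝ≥0∞) := by
            rw [← ENNReal.ofReal_natCast]
            exact ENNReal.ofReal_le_ofReal (Nat.le_ceil _)
      _ = ∑ n ∈ Finset.range ⌈r * x⌉₊, (Ioi ((n:ℝ)/r)).indicator (1 : ℝ → ℝ≥0∞) x := by
            have hterm : ∀ n ∈ Finset.range ⌈r * x⌉₊,
                (Ioi ((n:ℝ)/r)).indicator (1 : ℝ → ℝ≥0∞) x = 1 := by
              intro n hn
              have hn' : (n : ℝ) < r * x := Nat.lt_ceil.mp (Finset.mem_range.mp hn)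
              have hx' : (n:ℝ)/r < x := by rw [div_lt_iff₀ hr]; linarith [hn']
              simp [Set.indicator_of_mem, hx']
            rw [Finset.sum_congr rfl hterm, Finset.sum_const, nsmul_eq_mul, mul_one,
                Finset.card_range]
      _ ≤ _ := ENNReal.sum_le_tsum _
  have hmeas : ∀ n : ℕ, Measurable ((Ioi ((n:ℝ)/r)).indicator (1 : ℝ → ℝ≥0∞)) :=
    fun n => measurable_const.indicator measurableSet_Ioi
  have h2 : ∫⁻ x, ENNReal.ofReal (r * x) ∂(expMeasure r) ≤ ∑' n : ℕ, q ^ n := by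
    calc ∫⁻ x, ENNReal.ofReal (r * x) ∂(expMeasure r)
        ≤ ∫⁻ x, ∑' n : ℕ, (Ioi ((n:ℝ)/r)).indicator (1 : ℝ → ℝ≥0∞) x ∂(expMeasure r) :=
          lintegral_mono h1
      _ = ∑' n : ℕ, ∫⁻ x, (Ioi ((n:ℝ)/r)).indicator (1 : ℝ → ℝ≥0∞) x ∂(expMeasure r) :=
          lintegral_tsum (fun n => (hmeas n).aemeasurable)
      _ = ∑' n : ℕ, q ^ n := by
          refine tsum_congr (fun n => ?_)
          rw [lintegral_indicator_one measurableSet_Ioi,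
            expMeasure_Ioi hr (by positivity : (0:ℝ) ≤ (n:ℝ)/r)]
          have : r * ((n:ℝ)/r) = n := by field_simp
          rw [this, hq, ← ENNReal.ofReal_pow (by positivity), ← Real.exp_nat_mul]
          norm_num
  have h3 : (∑' n : ℕ, q ^ n) ≤ 2 := by
    rw [ENNReal.tsum_geometric]
    have hq2 : q ≤ ENNReal.ofReal (1/2) := by
      refine ENNReal.ofReal_le_ofReal ?_
      rw [Real.exp_neg]
      rw [inv_le_comm₀ (Real.exp_pos 1) (by norm_num)]
      calc (1/2 : ℝ)⁻¹ = 2 := by norm_num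
      _ ≤ Real.exp 1 := by linarith [Real.add_one_le_exp 1]
    have : (1 : ℝ≥0∞) - q ≥ 1/2 := by
      have : ENNReal.ofReal (1/2) ≤ 1 := by
        rw [← ENNReal.ofReal_one]; exact ENNReal.ofReal_le_ofReal (by norm_num)
      calc (1:ℝ≥0∞) - q ≥ 1 - ENNReal.ofReal (1/2) := tsub_le_tsub_left hq2 1
      _ = 1/2 := by
          rw [← ENNReal.ofReal_one, ← ENNReal.ofReal_sub _ (by norm_num)]
          norm_num
          rw [ENNReal.ofReal_div_of_pos] <;> norm_num
    calc (1 - q)⁻¹ ≤ ((1:ℝ≥0∞)/2)⁻¹ := ENNReal.inv_le_inv.mpr this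
    _ = 2 := by simp
  have h5 : ∫⁻ x, ENNReal.ofReal (r * x) ∂(expMeasure r)
      = ENNReal.ofReal r * ∫⁻ x, ENNReal.ofReal x ∂(expMeasure r) := by
    rw [← lintegral_const_mul _ ENNReal.measurable_ofReal]
    exact lintegral_congr (fun x => ENNReal.ofReal_mul hr.le)
  rw [h5] at h2
  have h2' := h2.trans h3
  rw [ENNReal.ofReal_div_of_pos hr]
  rw [ENNReal.le_div_iff_mul_le (Or.inl (by simpa using hr.not_ge ∘ ENNReal.ofReal_eq_zero.mp))
    (Or.inl ENNReal.ofReal_ne_top), mul_comm]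
  rw [ENNReal.ofReal_ofNat]
  exact h2'





lemma pow_div_factorial_mono {x : ℝ} (hx : 0 ≤ x) {n m : ℕ} (hnm : n ≤ m) (hm : (m:ℝ) ≤ x) :
    x ^ n / n.factorial ≤ x ^ m / m.factorial := by
  induction m, hnm using Nat.le_induction with
  | base => exact le_rfl
  | succ m hnm ih =>
      refine (ih (by push_cast at hm ⊢; linarith)).trans ?_
      rw [pow_succ, Nat.factorial_succ]
      rw [div_le_div_iff₀ (by positivity) (by positivity)]
      push_cast
      have h1 : (m : ℝ) + 1 ≤ x := by push_cast at hm; linarith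
      have h2 : (0:ℝ) ≤ x ^ m := by positivity
      have h3 : (0:ℝ) < m.factorial := by positivity
      nlinarith [mul_le_mul_of_nonneg_left h1 (mul_nonneg h2 h3.le)]

lemma pow_div_factorial_le_exp {x : ℝ} (hx : 0 ≤ x) (m : ℕ) :
    x ^ m / m.factorial ≤ Real.exp x := by
  calc x ^ m / m.factorial ≤ ∑ i ∈ Finset.range (m+1), x ^ i / i.factorial := by
        refine Finset.single_le_sum (f := fun i => x ^ i / (i.factorial : ℝ))
          (fun i _ => by positivity) (Finset.self_mem_range_succ m)
  _ ≤ Real.exp x := Real.sum_le_exp_of_nonneg hx _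

lemma poissonPMFReal_le {r : ℝ≥0} {n m : ℕ} (hnm : n ≤ m) (hm : (m:ℝ) ≤ r) :
    poissonPMFReal r n ≤ 2 ^ m * Real.exp (-(r/2)) := by
  unfold poissonPMFReal
  have h0 : (0:ℝ) ≤ r := r.coe_nonneg
  calc Real.exp (-(r:ℝ)) * (r:ℝ) ^ n / n.factorial
      = Real.exp (-(r:ℝ)) * ((r:ℝ) ^ n / n.factorial) := by ring
  _ ≤ Real.exp (-(r:ℝ)) * ((r:ℝ) ^ m / m.factorial) := by
      refine mul_le_mul_of_nonneg_left (pow_div_factorial_mono h0 hnm hm) (Real.exp_pos _).le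
  _ = Real.exp (-(r:ℝ)) * (2 ^ m * (((r:ℝ)/2) ^ m / m.factorial)) := by
      field_simp
      rw [← mul_pow]; congr 1; ring
  _ ≤ Real.exp (-(r:ℝ)) * (2 ^ m * Real.exp ((r:ℝ)/2)) := by
      refine mul_le_mul_of_nonneg_left
        (mul_le_mul_of_nonneg_left (pow_div_factorial_le_exp (by positivity) m)
          (by positivity)) (Real.exp_pos _).le
  _ = 2 ^ m * Real.exp (-(r/2)) := by
      rw [← mul_assoc, mul_comm (Real.exp _) ((2:ℝ)^m), mul_assoc, ← Real.exp_add]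
      ring_nf

lemma poisson_tail_le {r : ℝ≥0} {m : ℕ} (hm : (m : ℝ) ≤ r) :
    poissonMeasure r {n | n ≤ m}
      ≤ ENNReal.ofReal ((m+1) * (2 ^ m * Real.exp (-(r/2)))) := by
  have hset : {n : ℕ | n ≤ m} = ↑(Finset.range (m+1)) := by
    ext n; simp [Nat.lt_succ_iff]
  rw [hset, ← MeasureTheory.sum_measure_singleton]
  have hpmf : ∀ n, poissonMeasure r {n} = ENNReal.ofReal (poissonPMFReal r n) :=
    fun n => poissonMeasure_singleton r n
  calc ∑ n ∈ Finset.range (m+1), poissonMeasure r {n}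
      = ENNReal.ofReal (∑ n ∈ Finset.range (m+1), poissonPMFReal r n) := by
        rw [ENNReal.ofReal_sum_of_nonneg (fun n _ => poissonPMFReal_nonneg)]
        exact Finset.sum_congr rfl (fun n _ => hpmf n)
  _ ≤ ENNReal.ofReal ((m+1) * (2 ^ m * Real.exp (-(r/2)))) := by
        refine ENNReal.ofReal_le_ofReal ?_
        calc ∑ n ∈ Finset.range (m+1), poissonPMFReal r n
            ≤ ∑ n ∈ Finset.range (m+1), 2 ^ m * Real.exp (-(r/2)) := by
              refine Finset.sum_le_sum (fun n hn => ?_)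
              exact poissonPMFReal_le (Nat.lt_succ_iff.mp (Finset.mem_range.mp hn)) hm
        _ = (m+1) * (2 ^ m * Real.exp (-(r/2))) := by
              rw [Finset.sum_const, Finset.card_range, nsmul_eq_mul]
              push_cast; ring


lemma choose_rate_pos {k j : ℕ} (hk : 2 ≤ k) : (0:ℝ) < ((k + j).choose 2 : ℕ) := by
  have : 0 < (k + j).choose 2 := Nat.choose_pos (by omega)
  exact_mod_cast this

lemma ae_nonneg {Ω : Type*} [MeasurableSpace Ω] {μ : Measure Ω}
    (X : ℕ → ℕ → ℕ → Ω → ℝ) (hXmeas : ∀ k i j, Measurable (X k i j))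
    (hXdist : ∀ k, 2 ≤ k → ∀ i j, Measure.map (X k i j) μ = expMeasure ((k + j).choose 2)) :
    ∀ᵐ ω ∂μ, ∀ k i j, 2 ≤ k → 0 ≤ X k i j ω := by
  rw [ae_all_iff]; intro k
  rw [ae_all_iff]; intro i
  rw [ae_all_iff]; intro j
  by_cases hk : 2 ≤ k
  · refine Eventually.mono ?_ (fun ω h _ => h)
    have h : μ {ω | X k i j ω < 0} = 0 := by
      have : {ω | X k i j ω < 0} = X k i j ⁻¹' (Iio 0) := rfl
      rw [this, ← Measure.map_apply (hXmeas k i j) measurableSet_Iio, hXdist k hk i j,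
        expMeasure_Iio_zero]
    filter_upwards [measure_eq_zero_iff_ae_notMem.mp h] with ω hω
    exact not_lt.mp hω
  · filter_upwards with ω h; omega

lemma two_mul_choose_two (n : ℕ) : 2 * n.choose 2 = n * (n - 1) := by
  rw [Nat.choose_two_right, Nat.mul_div_cancel' (Nat.even_mul_pred_self n).two_dvd]

lemma rate_ge {k j : ℕ} (hk : 2 ≤ k) :
    ((j:ℝ) + 1) * ((j:ℝ) + 2) ≤ 2 * ((k + j).choose 2 : ℕ) := by
  have h1 : (j+1) * (j+2) ≤ (k + j - 1) * (k + j) := by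
    apply Nat.mul_le_mul <;> omega
  have h2 : 2 * (k+j).choose 2 = (k+j) * (k+j-1) := two_mul_choose_two _
  have := h1
  rw [Nat.mul_comm (k+j-1)] at h1
  rw [← h2] at h1
  exact_mod_cast h1

lemma ae_summable {Ω : Type*} [MeasurableSpace Ω] {μ : Measure Ω} [IsProbabilityMeasure μ]
    (X : ℕ → ℕ → ℕ → Ω → ℝ) (hXmeas : ∀ k i j, Measurable (X k i j))
    (hXdist : ∀ k, 2 ≤ k → ∀ i j, Measure.map (X k i j) μ = expMeasure ((k + j).choose 2)) :
    ∀ᵐ ω ∂μ, ∀ k, 2 ≤ k → ∀ i, (∀ j, 0 ≤ X k i j ω) → Summable (fun j => X k i j ω) := by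
  rw [ae_all_iff]; intro k
  by_cases hk : 2 ≤ k
  swap
  · filter_upwards with ω h; omega
  refine Eventually.mono ?_ (fun ω h _ => h)
  rw [ae_all_iff]; intro i
  -- the sum of ofReal has finite integral
  have hfin : ∫⁻ ω, ∑' j, ENNReal.ofReal (X k i j ω) ∂μ < ⊤ := by
    rw [lintegral_tsum (fun j => ((hXmeas k i j).ennreal_ofReal).aemeasurable)]
    have hone : ∀ j : ℕ, ∫⁻ ω, ENNReal.ofReal (X k i j ω) ∂μ
        ≤ ENNReal.ofReal (4 / (((j:ℝ)+1) * ((j:ℝ)+2))) := by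
      intro j
      have hr : (0:ℝ) < ((k + j).choose 2 : ℕ) := choose_rate_pos hk
      calc ∫⁻ ω, ENNReal.ofReal (X k i j ω) ∂μ
          = ∫⁻ x, ENNReal.ofReal x ∂(Measure.map (X k i j) μ) := by
            rw [lintegral_map ENNReal.measurable_ofReal (hXmeas k i j)]
      _ ≤ ENNReal.ofReal (2 / ((k + j).choose 2 : ℕ)) := by
            rw [hXdist k hk i j]
            exact lintegral_ofReal_expMeasure hr
      _ ≤ ENNReal.ofReal (4 / (((j:ℝ)+1) * ((j:ℝ)+2))) := by
            refine ENNReal.ofReal_le_ofReal ?_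
            rw [div_le_div_iff₀ hr (by positivity)]
            nlinarith [rate_ge (j := j) hk]
    have hsummable : Summable (fun j : ℕ => 4 / (((j:ℝ)+1) * ((j:ℝ)+2))) := by
      have h2 : Summable (fun j : ℕ => 4 * (1 / ((j:ℝ)+1) ^ 2)) := by
        refine Summable.mul_left 4 ?_
        have := (summable_nat_add_iff 1).mpr
          (Real.summable_one_div_nat_pow.mpr (by norm_num : 1 < 2))
        simpa using this
      refine Summable.of_nonneg_of_le (fun j => by positivity) (fun j => ?_) h2
      rw [div_le_iff₀ (by positivity)]
      have : ((j:ℝ)+1)^2 ≤ ((j:ℝ)+1)*((j:ℝ)+2) := by nlinarith [Nat.cast_nonneg (α := ℝ) j]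
      calc (4:ℝ) = (4 * (1/((j:ℝ)+1)^2)) * ((j:ℝ)+1)^2 := by field_simp
      _ ≤ _ := by
          refine mul_le_mul_of_nonneg_left this (by positivity)
    calc ∑' j, ∫⁻ ω, ENNReal.ofReal (X k i j ω) ∂μ
        ≤ ∑' j : ℕ, ENNReal.ofReal (4 / (((j:ℝ)+1) * ((j:ℝ)+2))) := ENNReal.tsum_le_tsum hone
    _ = ENNReal.ofReal (∑' j : ℕ, 4 / (((j:ℝ)+1) * ((j:ℝ)+2))) :=
        (ENNReal.ofReal_tsum_of_nonneg (fun j => by positivity) hsummable).symm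
    _ < ⊤ := ENNReal.ofReal_lt_top
  have hae := ae_lt_top (by
    exact Measurable.ennreal_tsum (fun j => (hXmeas k i j).ennreal_ofReal))
    hfin.ne
  filter_upwards [hae] with ω hω hnn
  have := ENNReal.summable_toReal hω.ne
  refine this.congr (fun j => ?_)
  simp [ENNReal.toReal_ofReal (hnn j)]





lemma indicator_mul_indicator_const {Ω : Type*} (s u : Set Ω) (a b : ℝ) (ω : Ω) :
    s.indicator (fun _ => a) ω * u.indicator (fun _ => b) ω
      = (s ∩ u).indicator (fun _ => a * b) ω := by
  by_cases hs : ω ∈ s <;> by_cases hu : ω ∈ u <;>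
    simp [Set.indicator_of_mem, Set.indicator_of_notMem, hs, hu, Set.mem_inter_iff]

/-- Abstract second-moment divergence: pairwise independent events with probabilities
bounded below and divergent weights give a.s. divergence of the weighted indicator series. -/
lemma divergence_abstract {Ω : Type*} [MeasurableSpace Ω] (μ : Measure Ω)
    [IsProbabilityMeasure μ] (K : ℕ) (F : ℕ → Set Ω) (hFmeas : ∀ k, MeasurableSet (F k))
    (a : ℕ → ℝ) (ha : ∀ k, 0 ≤ a k)
    (ha2 : ∀ n, ∑ k ∈ Finset.Icc K n, (a k)^2 ≤ 1)
    (hp : ∀ k, K ≤ k → ENNReal.ofReal (1/10) ≤ μ (F k))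
    (hind : ∀ k l, k ≠ l → μ (F k ∩ F l) = μ (F k) * μ (F l))
    (hdiv : Tendsto (fun n => ∑ k ∈ Finset.Icc K n, a k) atTop atTop) :
    ∀ᵐ ω ∂μ, Tendsto
      (fun n => ∑ k ∈ Finset.Icc K n, (F k).indicator (fun _ => a k) ω) atTop atTop := by
  classical
  set p : ℕ → ℝ := fun k => (μ (F k)).toReal with hpdef
  have hp01 : ∀ k, 0 ≤ p k ∧ p k ≤ 1 := by
    intro k
    refine ⟨ENNReal.toReal_nonneg, ?_⟩
    rw [hpdef]
    calc (μ (F k)).toReal ≤ (μ Set.univ).toReal := by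
          refine ENNReal.toReal_mono (measure_ne_top _ _) (measure_mono (Set.subset_univ _))
    _ = 1 := by simp
  have hplow : ∀ k, K ≤ k → 1/10 ≤ p k := by
    intro k hk
    have := hp k hk
    rw [hpdef]
    calc (1:ℝ)/10 = (ENNReal.ofReal (1/10)).toReal := by
          rw [ENNReal.toReal_ofReal]; norm_num
    _ ≤ (μ (F k)).toReal := ENNReal.toReal_mono (measure_ne_top _ _) this
  set Y : ℕ → Ω → ℝ := fun k => (F k).indicator (fun _ => a k) with hY
  set V : ℕ → Ω → ℝ := fun n ω => ∑ k ∈ Finset.Icc K n, Y k ω with hV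
  have hYint : ∀ k, Integrable (Y k) μ := fun k =>
    (integrable_const (a k)).indicator (hFmeas k)
  have hEY : ∀ k, ∫ ω, Y k ω ∂μ = a k * p k := by
    intro k
    rw [hY]
    simp only []
    rw [integral_indicator_const _ (hFmeas k)]
    simp [hpdef, mul_comm, Measure.real]
  have hVint : ∀ n, Integrable (V n) μ := fun n =>
    integrable_finset_sum _ (fun k _ => hYint k)
  have hEV : ∀ n, ∫ ω, V n ω ∂μ = ∑ k ∈ Finset.Icc K n, a k * p k := by
    intro n
    rw [hV]
    simp only []
    rw [integral_finset_sum _ (fun k _ => hYint k)]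
    exact Finset.sum_congr rfl (fun k _ => hEY k)
  set E : ℕ → ℝ := fun n => ∑ k ∈ Finset.Icc K n, a k * p k with hE
  -- E tends to infinity
  have hEdiv : Tendsto E atTop atTop := by
    refine tendsto_atTop_mono ?_ (hdiv.const_mul_atTop (by norm_num : (0:ℝ) < 1/10))
    intro n
    rw [hE, Finset.mul_sum]
    refine Finset.sum_le_sum (fun k hk => ?_)
    have := hplow k (Finset.mem_Icc.mp hk).1
    have h0 := ha k
    nlinarith
  -- second moment bound
  have hsecond : ∀ n, ∫ ω, (V n ω - E n)^2 ∂μ ≤ 1 := by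
    intro n
    have hprod : ∀ k l, Y k * Y l = (F k ∩ F l).indicator (fun _ => a k * a l) := by
      intro k l
      funext ω
      exact indicator_mul_indicator_const _ _ _ _ ω
    have hYYint : ∀ (k l : ℕ), Integrable (fun ω => Y k ω * Y l ω) μ := by
      intro k l
      have : (fun ω => Y k ω * Y l ω) = (F k ∩ F l).indicator (fun _ => a k * a l) := by
        funext ω; exact indicator_mul_indicator_const _ _ _ _ ω
      rw [this]
      exact (integrable_const _).indicator ((hFmeas k).inter (hFmeas l))
    have hV2 : ∫ ω, (V n ω)^2 ∂μ
        = ∑ k ∈ Finset.Icc K n, ∑ l ∈ Finset.Icc K n,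
            a k * a l * (μ (F k ∩ F l)).toReal := by
      have hexp : ∀ ω, (V n ω)^2 = ∑ k ∈ Finset.Icc K n, ∑ l ∈ Finset.Icc K n,
          Y k ω * Y l ω := by
        intro ω
        rw [hV]
        simp only []
        rw [sq, Finset.sum_mul_sum]
      rw [integral_congr_ae (Eventually.of_forall hexp)]
      rw [integral_finset_sum _ (fun k _ => integrable_finset_sum _ (fun l _ => hYYint k l))]
      refine Finset.sum_congr rfl (fun k _ => ?_)
      rw [integral_finset_sum _ (fun l _ => hYYint k l)]
      refine Finset.sum_congr rfl (fun l _ => ?_)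
      have : (fun ω => Y k ω * Y l ω) = (F k ∩ F l).indicator (fun _ => a k * a l) := by
        funext ω; exact indicator_mul_indicator_const _ _ _ _ ω
      rw [this, integral_indicator_const _ ((hFmeas k).inter (hFmeas l))]
      simp [mul_comm, Measure.real]
    have hsq : ∫ ω, (V n ω - E n)^2 ∂μ = ∫ ω, (V n ω)^2 ∂μ - (E n)^2 := by
      have hexp : ∀ ω, (V n ω - E n)^2 = (V n ω)^2 - 2 * E n * V n ω + (E n)^2 := by
        intro ω; ring
      rw [integral_congr_ae (Eventually.of_forall hexp)]
      have hV2int : Integrable (fun ω => (V n ω)^2) μ := by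
        have : (fun ω => (V n ω)^2) = fun ω => ∑ k ∈ Finset.Icc K n,
            ∑ l ∈ Finset.Icc K n, Y k ω * Y l ω := by
          funext ω
          rw [hV]; simp only []; rw [sq, Finset.sum_mul_sum]
        rw [this]
        exact integrable_finset_sum _ (fun k _ =>
          integrable_finset_sum _ (fun l _ => hYYint k l))
      have h1 : Integrable (fun ω => 2 * E n * V n ω) μ := (hVint n).const_mul _
      have h2 : Integrable (fun ω => (V n ω)^2 - 2 * E n * V n ω) μ := hV2int.sub h1
      rw [integral_add h2 (integrable_const _), integral_sub hV2int h1,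
        integral_const, MeasureTheory.integral_const_mul]
      simp only [measure_univ, ENNReal.toReal_one, smul_eq_mul, one_mul, probReal_univ]
      rw [hEV n, show (∑ k ∈ Finset.Icc K n, a k * p k) = E n from rfl]
      ring
    rw [hsq, hV2]
    -- the double sum minus E^2 equals the diagonal correction
    have hEsq : (E n)^2 = ∑ k ∈ Finset.Icc K n, ∑ l ∈ Finset.Icc K n,
        (a k * p k) * (a l * p l) := by
      rw [hE, sq, Finset.sum_mul_sum]
    rw [hEsq, ← Finset.sum_sub_distrib]
    have : ∀ k ∈ Finset.Icc K n,
        (∑ l ∈ Finset.Icc K n, a k * a l * (μ (F k ∩ F l)).toReal)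
          - (∑ l ∈ Finset.Icc K n, (a k * p k) * (a l * p l))
        ≤ (a k)^2 := by
      intro k hk
      rw [← Finset.sum_sub_distrib]
      have hterm : ∀ l ∈ Finset.Icc K n,
          a k * a l * (μ (F k ∩ F l)).toReal - (a k * p k) * (a l * p l)
          = if l = k then a k * a k * ((μ (F k)).toReal - p k * p k) else 0 := by
        intro l hl
        by_cases hlk : l = k
        · subst hlk
          rw [if_pos rfl, Set.inter_self]
          rw [show (μ (F l)).toReal = p l from rfl]
          ring
        · rw [if_neg hlk, hind k l (fun h => hlk h.symm), ENNReal.toReal_mul,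
            show (μ (F k)).toReal = p k from rfl, show (μ (F l)).toReal = p l from rfl]
          ring
      rw [Finset.sum_congr rfl hterm, Finset.sum_ite_eq' (Finset.Icc K n) k, if_pos hk]
      have h1 := (hp01 k).1
      have h2 := (hp01 k).2
      have h3 := ha k
      have : (μ (F k)).toReal = p k := rfl
      rw [this]
      nlinarith
    calc ∑ k ∈ Finset.Icc K n, ((∑ l ∈ Finset.Icc K n, a k * a l * (μ (F k ∩ F l)).toReal)
          - ∑ l ∈ Finset.Icc K n, (a k * p k) * (a l * p l))
        ≤ ∑ k ∈ Finset.Icc K n, (a k)^2 := Finset.sum_le_sum this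
    _ ≤ 1 := ha2 n
  -- Chebyshev: for every natural N, a.s. some V n exceeds N
  have hcheb : ∀ N : ℕ, μ (⋃ n, {ω | (N:ℝ) ≤ V n ω})ᶜ = 0 := by
    intro N
    have hbound : ∀ n, (N:ℝ) + 1 ≤ E n →
        μ (⋃ m, {ω | (N:ℝ) ≤ V m ω})ᶜ ≤ ENNReal.ofReal (1 / (E n - N)^2) := by
      intro n hn
      have hsub : (⋃ m, {ω | (N:ℝ) ≤ V m ω})ᶜ ⊆ {ω | (E n - N)^2 ≤ (V n ω - E n)^2} := by
        intro ω hω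
        simp only [Set.mem_compl_iff, Set.mem_iUnion, not_exists, Set.mem_setOf_eq, not_le] at hω
        have h1 : V n ω < N := hω n
        have h2 : E n - V n ω ≥ E n - N := by linarith
        have h3 : (0:ℝ) ≤ E n - N := by linarith
        simp only [Set.mem_setOf_eq]
        nlinarith
      have hfnonneg : 0 ≤ᵐ[μ] fun ω => (V n ω - E n)^2 := Eventually.of_forall (fun ω => sq_nonneg _)
      have hfint : Integrable (fun ω => (V n ω - E n)^2) μ := by
        have : (fun ω => (V n ω - E n)^2)
            = fun ω => (V n ω)^2 - 2 * E n * V n ω + (E n)^2 := by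
          funext ω; ring
        rw [this]
        have hV2int : Integrable (fun ω => (V n ω)^2) μ := by
          have : (fun ω => (V n ω)^2) = fun ω => ∑ k ∈ Finset.Icc K n,
              ∑ l ∈ Finset.Icc K n, Y k ω * Y l ω := by
            funext ω
            rw [hV]; simp only []; rw [sq, Finset.sum_mul_sum]
          rw [this]
          refine integrable_finset_sum _ (fun k _ => integrable_finset_sum _ (fun l _ => ?_))
          have : (fun ω => Y k ω * Y l ω) = (F k ∩ F l).indicator (fun _ => a k * a l) := by
            funext ω; exact indicator_mul_indicator_const _ _ _ _ ω
          rw [this]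
          exact (integrable_const _).indicator ((hFmeas k).inter (hFmeas l))
        exact (hV2int.sub ((hVint n).const_mul _)).add (integrable_const _)
      have hmarkov := mul_meas_ge_le_integral_of_nonneg hfnonneg hfint ((E n - N)^2)
      have hpos : (0:ℝ) < (E n - N)^2 := by nlinarith
      have htoReal : (μ {ω | (E n - N)^2 ≤ (V n ω - E n)^2}).toReal ≤ 1 / (E n - N)^2 := by
        rw [le_div_iff₀ hpos, mul_comm]
        exact hmarkov.trans (hsecond n)
      calc μ (⋃ m, {ω | (N:ℝ) ≤ V m ω})ᶜ ≤ μ {ω | (E n - N)^2 ≤ (V n ω - E n)^2} :=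
            measure_mono hsub
      _ ≤ ENNReal.ofReal (1 / (E n - N)^2) := by
            rw [ENNReal.le_ofReal_iff_toReal_le (measure_ne_top _ _) (by positivity)]
            exact htoReal
    -- take the limit
    have hlim : Tendsto (fun m : ℕ => ENNReal.ofReal (1 / ((m:ℝ) + 1))) atTop (𝓝 0) := by
      rw [show (0:ℝ≥0∞) = ENNReal.ofReal 0 by simp]
      refine ENNReal.tendsto_ofReal ?_
      have := tendsto_one_div_add_atTop_nhds_zero_nat (𝕜 := ℝ)
      exact this
    refine le_antisymm (ge_of_tendsto' hlim ?_) (zero_le)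
    intro m
    -- choose n with E n ≥ N + m + 1
    obtain ⟨n, hn⟩ := (tendsto_atTop.mp hEdiv ((N:ℝ) + m + 1)).exists
    have hm0 : (0:ℝ) ≤ (m:ℝ) := by positivity
    have h1 : (N:ℝ) + 1 ≤ E n := by linarith
    refine (hbound n h1).trans (ENNReal.ofReal_le_ofReal ?_)
    have h2 : (m:ℝ) + 1 ≤ E n - N := by linarith
    have h3 : (0:ℝ) < (m:ℝ) + 1 := by positivity
    rw [div_le_div_iff₀ (by nlinarith) h3]
    nlinarith
  have hae : ∀ᵐ ω ∂μ, ∀ N : ℕ, ω ∈ ⋃ n, {ω | (N:ℝ) ≤ V n ω} := by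
    rw [ae_all_iff]
    intro N
    exact measure_eq_zero_iff_ae_notMem.mp (hcheb N) |>.mono (fun ω h => not_not.mp h)
  filter_upwards [hae] with ω hω
  have hmono : Monotone (fun n => V n ω) := by
    intro n₁ n₂ h
    refine Finset.sum_le_sum_of_subset_of_nonneg (Finset.Icc_subset_Icc_right h) ?_
    intro k _ _
    exact Set.indicator_nonneg (fun _ _ => ha k) ω
  refine tendsto_atTop_atTop_of_monotone hmono ?_
  intro b
  obtain ⟨n, hn⟩ := Set.mem_iUnion.mp (hω ⌈b⌉₊)
  exact ⟨n, le_trans ((Nat.le_ceil b).trans (by exact_mod_cast le_refl _)) hn⟩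


section Defs

noncomputable def epsk (k : ℕ) : ℝ := 1 / (4 * (k:ℝ)^2)

def c1 (k : ℕ) : ℕ := k / 4 + 1

noncomputable def mnum (d : ℝ) (k : ℕ) : ℕ := ⌊((k:ℝ) - 1) * d / 2⌋₊

noncomputable def c2 (d : ℝ) (k : ℕ) : ℕ := mnum d k / 4 + 1

variable {Ω : Type*} [MeasurableSpace Ω]

def Ek (X : ℕ → ℕ → ℕ → Ω → ℝ) (k i j : ℕ) : Set Ω := X k i j ⁻¹' Ici (epsk k)

def Dk (X : ℕ → ℕ → ℕ → Ω → ℝ) (k i : ℕ) : Set Ω :=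
  {ω | c1 k ≤ cnt (Finset.range k) (Ek X k i) ω}

def Ck (X : ℕ → ℕ → ℕ → Ω → ℝ) (d : ℝ) (k : ℕ) : Set Ω :=
  {ω | c2 d k ≤ cnt (Finset.range (mnum d k)) (Dk X k) ω}

def Ak (M : ℕ → Ω → ℕ) (d : ℝ) (k : ℕ) : Set Ω := M k ⁻¹' {n | mnum d k < n}

def Fk (M : ℕ → Ω → ℕ) (X : ℕ → ℕ → ℕ → Ω → ℝ) (d : ℝ) (k : ℕ) : Set Ω :=
  Ak M d k ∩ Ck X d k

end Defs

section Meas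

variable {Ω : Type*} [MeasurableSpace Ω] {X : ℕ → ℕ → ℕ → Ω → ℝ} {M : ℕ → Ω → ℕ} {d : ℝ}

lemma measurableSet_Dk {m : MeasurableSpace Ω} (k i : ℕ)
    (h : ∀ j, MeasurableSet[m] (Ek X k i j)) : MeasurableSet[m] (Dk X k i) :=
  measurableSet_cnt_ge _ _ (fun j _ => h j) _

lemma measurableSet_Ck {m : MeasurableSpace Ω} (k : ℕ)
    (h : ∀ i, MeasurableSet[m] (Dk X k i)) : MeasurableSet[m] (Ck X d k) :=
  measurableSet_cnt_ge _ _ (fun i _ => h i) _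

lemma measurableSet_Ek (hXmeas : ∀ k i j, Measurable (X k i j)) (k i j : ℕ) :
    MeasurableSet (Ek X k i j) := (hXmeas k i j) measurableSet_Ici

lemma measurableSet_Dk' (hXmeas : ∀ k i j, Measurable (X k i j)) (k i : ℕ) :
    MeasurableSet (Dk X k i) := measurableSet_Dk k i (measurableSet_Ek hXmeas k i)

lemma measurableSet_Ck' (hXmeas : ∀ k i j, Measurable (X k i j)) (k : ℕ) :
    MeasurableSet (Ck X d k) := measurableSet_Ck k (measurableSet_Dk' hXmeas k)

lemma measurableSet_Ak (hMmeas : ∀ k, Measurable (M k)) (k : ℕ) :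
    MeasurableSet (Ak M d k) := (hMmeas k) (by trivial)

lemma measurableSet_Fk (hMmeas : ∀ k, Measurable (M k)) (hXmeas : ∀ k i j, Measurable (X k i j))
    (k : ℕ) : MeasurableSet (Fk M X d k) :=
  (measurableSet_Ak hMmeas k).inter (measurableSet_Ck' hXmeas k)

end Meas

section Bounds

variable {Ω : Type*} [MeasurableSpace Ω] {μ : Measure Ω} [IsProbabilityMeasure μ]
  {X : ℕ → ℕ → ℕ → Ω → ℝ} {M : ℕ → Ω → ℕ} {d : ℝ}

lemma exp_half_bounds : Real.exp (1/2 : ℝ) < 5/3 := by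
  have h1 : Real.exp (1/2:ℝ) * Real.exp (1/2:ℝ) = Real.exp 1 := by
    rw [← Real.exp_add]; norm_num
  nlinarith [Real.exp_pos (1/2:ℝ), Real.exp_one_lt_d9]

lemma one_sub_exp_le : 1 - Real.exp (-(1/2):ℝ) ≤ 2/5 := by
  have h := exp_half_bounds
  have h2 : Real.exp (-(1/2):ℝ) = (Real.exp (1/2:ℝ))⁻¹ := by
    rw [← Real.exp_neg]
  have h3 : (3:ℝ)/5 ≤ Real.exp (-(1/2):ℝ) := by
    rw [h2, le_inv_comm₀ (by norm_num) (Real.exp_pos _)]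
    linarith
  linarith

lemma meas_Ek_compl_le (hXmeas : ∀ k i j, Measurable (X k i j))
    (hXdist : ∀ k, 2 ≤ k → ∀ i j,
      Measure.map (X k i j) μ = expMeasure ((k + j).choose 2))
    {k : ℕ} (hk : 2 ≤ k) (i : ℕ) {j : ℕ} (hj : j < k) :
    μ (Ek X k i j)ᶜ ≤ ENNReal.ofReal (2/5) := by
  have hkR : (0:ℝ) < (k:ℝ) := by exact_mod_cast (by omega : 0 < k)
  have hr : (0:ℝ) < ((k + j).choose 2 : ℕ) := by
    have : 0 < (k + j).choose 2 := Nat.choose_pos (by omega)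
    exact_mod_cast this
  have heps : 0 < epsk k := by rw [epsk]; positivity
  have hcompl : (Ek X k i j)ᶜ = X k i j ⁻¹' (Iio (epsk k)) := by
    rw [Ek, ← Set.preimage_compl, compl_Ici]
  rw [hcompl, ← Measure.map_apply (hXmeas k i j) measurableSet_Iio, hXdist k hk i j]
  calc (expMeasure (((k + j).choose 2 : ℕ) : ℝ)) (Iio (epsk k))
      ≤ ENNReal.ofReal (1 - Real.exp (-((((k + j).choose 2 : ℕ) : ℝ) * epsk k))) :=
        expMeasure_Iio_le hr heps.le
  _ ≤ ENNReal.ofReal (2/5) := by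
      refine ENNReal.ofReal_le_ofReal ?_
      have hchoose : 2 * ((k + j).choose 2) ≤ 4 * k^2 := by
        rw [two_mul_choose_two]
        calc (k+j) * (k+j-1) ≤ (2*k) * (2*k) := Nat.mul_le_mul (by omega) (by omega)
        _ = 4 * k^2 := by ring
      have hchooseR : ((((k + j).choose 2 : ℕ)) : ℝ) ≤ 2 * (k:ℝ)^2 := by
        have : (2 * ((k + j).choose 2) : ℕ) ≤ ((4 * k^2 : ℕ) : ℕ) := hchoose
        have h' : (2:ℝ) * (((k + j).choose 2 : ℕ) : ℝ) ≤ 4 * (k:ℝ)^2 := by exact_mod_cast this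
        linarith
      have hre : (((k + j).choose 2 : ℕ) : ℝ) * epsk k ≤ 1/2 := by
        rw [epsk]
        rw [mul_one_div, div_le_div_iff₀ (by positivity) (by norm_num)]
        nlinarith
      have hexp : Real.exp (-(1/2:ℝ)) ≤ Real.exp (-((((k + j).choose 2 : ℕ) : ℝ) * epsk k)) :=
        Real.exp_le_exp.mpr (by linarith)
      have h5 := one_sub_exp_le
      linarith

lemma ennreal_count_div_le {n c : ℕ} {x y : ℝ} (hx : 0 ≤ x) (hy : 0 ≤ y)
    (h : (n:ℝ) * x ≤ (c:ℝ) * y) :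
    (n:ℝ≥0∞) * ENNReal.ofReal x / (c:ℕ) ≤ ENNReal.ofReal y := by
  refine ENNReal.div_le_of_le_mul ?_
  calc (n:ℝ≥0∞) * ENNReal.ofReal x = ENNReal.ofReal ((n:ℝ) * x) := by
        rw [ENNReal.ofReal_mul (Nat.cast_nonneg n), ENNReal.ofReal_natCast]
  _ ≤ ENNReal.ofReal ((c:ℝ) * y) := ENNReal.ofReal_le_ofReal h
  _ = ENNReal.ofReal y * (c:ℕ) := by
        rw [ENNReal.ofReal_mul (Nat.cast_nonneg c), ENNReal.ofReal_natCast, mul_comm]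

lemma meas_Dk_compl_le (hXmeas : ∀ k i j, Measurable (X k i j))
    (hXdist : ∀ k, 2 ≤ k → ∀ i j,
      Measure.map (X k i j) μ = expMeasure ((k + j).choose 2))
    {k : ℕ} (hk : 2 ≤ k) (i : ℕ) :
    μ (Dk X k i)ᶜ ≤ ENNReal.ofReal (3/5) := by
  set c := (Finset.range k).card - c1 k + 1 with hc
  have hcc : c1 k ≤ (Finset.range k).card := by
    rw [Finset.card_range]; unfold c1; omega
  have hsub := compl_cnt_ge_subset (s := Finset.range k) (B := Ek X k i) hcc
  calc μ (Dk X k i)ᶜ ≤ μ {ω | c ≤ cnt (Finset.range k) (fun j => (Ek X k i j)ᶜ) ω} :=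
        measure_mono hsub
  _ ≤ (∑ j ∈ Finset.range k, μ (Ek X k i j)ᶜ) / c :=
        meas_cnt_ge_le _ _ (fun j _ => (measurableSet_Ek hXmeas k i j).compl) (by omega)
  _ ≤ ((k:ℝ≥0∞) * ENNReal.ofReal (2/5)) / c := by
        refine ENNReal.div_le_div_right ?_ _
        calc ∑ j ∈ Finset.range k, μ (Ek X k i j)ᶜ
            ≤ ∑ _j ∈ Finset.range k, ENNReal.ofReal (2/5) := by
              refine Finset.sum_le_sum (fun j hj => ?_)
              exact meas_Ek_compl_le hXmeas hXdist hk i (Finset.mem_range.mp hj)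
        _ = (k:ℝ≥0∞) * ENNReal.ofReal (2/5) := by
              rw [Finset.sum_const, Finset.card_range, nsmul_eq_mul]
  _ ≤ ENNReal.ofReal (3/5) := by
        refine ennreal_count_div_le (by norm_num) (by norm_num) ?_
        have hnat : 2 * k ≤ 3 * c := by
          rw [hc, Finset.card_range]; unfold c1; omega
        have : (2:ℝ) * k ≤ 3 * c := by exact_mod_cast hnat
        linarith

lemma meas_Ck_compl_le (hXmeas : ∀ k i j, Measurable (X k i j))
    (hXdist : ∀ k, 2 ≤ k → ∀ i j,
      Measure.map (X k i j) μ = expMeasure ((k + j).choose 2))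
    {k : ℕ} (hk : 2 ≤ k) (hm : 1 ≤ mnum d k) :
    μ (Ck X d k)ᶜ ≤ ENNReal.ofReal (4/5) := by
  set m := mnum d k with hmdef
  set c := (Finset.range m).card - c2 d k + 1 with hc
  have hcc : c2 d k ≤ (Finset.range m).card := by
    rw [Finset.card_range]; unfold c2; rw [← hmdef]; omega
  have hsub := compl_cnt_ge_subset (s := Finset.range m) (B := Dk X k) hcc
  calc μ (Ck X d k)ᶜ ≤ μ {ω | c ≤ cnt (Finset.range m) (fun i => (Dk X k i)ᶜ) ω} :=
        measure_mono hsub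
  _ ≤ (∑ i ∈ Finset.range m, μ (Dk X k i)ᶜ) / c :=
        meas_cnt_ge_le _ _ (fun i _ => (measurableSet_Dk' hXmeas k i).compl) (by omega)
  _ ≤ ((m:ℝ≥0∞) * ENNReal.ofReal (3/5)) / c := by
        refine ENNReal.div_le_div_right ?_ _
        calc ∑ i ∈ Finset.range m, μ (Dk X k i)ᶜ
            ≤ ∑ _i ∈ Finset.range m, ENNReal.ofReal (3/5) :=
              Finset.sum_le_sum (fun i _ => meas_Dk_compl_le hXmeas hXdist hk i)
        _ = (m:ℝ≥0∞) * ENNReal.ofReal (3/5) := by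
              rw [Finset.sum_const, Finset.card_range, nsmul_eq_mul]
  _ ≤ ENNReal.ofReal (4/5) := by
        refine ennreal_count_div_le (by norm_num) (by norm_num) ?_
        have hnat : 3 * m ≤ 4 * c := by
          rw [hc, Finset.card_range]; unfold c2; rw [← hmdef]; omega
        have : (3:ℝ) * m ≤ 4 * c := by exact_mod_cast hnat
        linarith

lemma meas_Ak_compl_le (hMmeas : ∀ k, Measurable (M k))
    (hMdist : ∀ k, 2 ≤ k → Measure.map (M k) μ = poissonMeasure (((k:ℝ)-1)*d).toNNReal)
    (hd : 0 < d) {k : ℕ} (hk : 2 ≤ k) :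
    μ (Ak M d k)ᶜ ≤ ENNReal.ofReal
      (((mnum d k : ℝ)+1) * (2^(mnum d k) * Real.exp (-(((k:ℝ)-1)*d/2)))) := by
  have hkR : (1:ℝ) ≤ (k:ℝ) - 1 := by
    have : (2:ℝ) ≤ (k:ℝ) := by exact_mod_cast hk
    linarith
  have hlam : (0:ℝ) ≤ ((k:ℝ)-1)*d := by nlinarith
  have hcoe : ((((k:ℝ)-1)*d).toNNReal : ℝ) = ((k:ℝ)-1)*d := Real.coe_toNNReal _ hlam
  have hcompl : (Ak M d k)ᶜ = M k ⁻¹' {n | n ≤ mnum d k} := by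
    rw [Ak, ← Set.preimage_compl]
    congr 1
    ext n
    simp [Set.mem_compl_iff]
  rw [hcompl, ← Measure.map_apply (hMmeas k) (by trivial), hMdist k hk]
  have hm : ((mnum d k : ℕ) : ℝ) ≤ ((((k:ℝ)-1)*d).toNNReal : ℝ) := by
    rw [hcoe]
    calc ((mnum d k : ℕ) : ℝ) ≤ ((k:ℝ)-1)*d/2 := Nat.floor_le (by positivity)
    _ ≤ ((k:ℝ)-1)*d := by linarith
  refine (poisson_tail_le hm).trans (le_of_eq ?_)
  rw [hcoe]

end Bounds
section Indep

variable {Ω : Type*} [MeasurableSpace Ω] {μ : Measure Ω}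

lemma measurableSet_mono {m m' : MeasurableSpace Ω} (h : m ≤ m') {s : Set Ω}
    (hs : MeasurableSet[m] s) : MeasurableSet[m'] s := h _ hs

def SA (k : ℕ) : Set (ℕ ⊕ ℕ × ℕ × ℕ) := {Sum.inl k}
def SX (k : ℕ) : Set (ℕ ⊕ ℕ × ℕ × ℕ) := Sum.inr '' {p | p.1 = k}
def SB (k : ℕ) : Set (ℕ ⊕ ℕ × ℕ × ℕ) := SA k ∪ SX k

lemma disjoint_SA_SX (k l : ℕ) : Disjoint (SA k) (SX l) := by
  refine Set.disjoint_left.mpr ?_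
  rintro a ha ⟨p, -, hp⟩
  have ha' : a = Sum.inl k := ha
  subst ha'
  exact Sum.inr_ne_inl hp

lemma disjoint_SB (k l : ℕ) (hkl : k ≠ l) : Disjoint (SB k) (SB l) := by
  refine Set.disjoint_left.mpr ?_
  rintro a (ha | ha) (hb | hb)
  · have ha' : a = Sum.inl k := ha
    have hb' : a = Sum.inl l := hb
    exact hkl (by rw [ha'] at hb'; exact (Sum.inl.injEq _ _).mp hb')
  · obtain ⟨p, -, hp⟩ := hb
    have ha' : a = Sum.inl k := ha
    subst ha'; exact Sum.inr_ne_inl hp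
  · obtain ⟨p, -, hp⟩ := ha
    have hb' : a = Sum.inl l := hb
    subst hb'; exact Sum.inr_ne_inl hp
  · obtain ⟨p, hp1, hp⟩ := ha
    obtain ⟨q, hq1, hq⟩ := hb
    have : p = q := by rw [← hq] at hp; exact (Sum.inr.injEq _ _).mp hp
    subst this
    exact hkl (hp1 ▸ hq1 ▸ rfl)

variable (M : ℕ → Ω → ℕ) (X : ℕ → ℕ → ℕ → Ω → ℝ)

lemma indep_main {d : ℝ}
    (hMmeas : ∀ k, Measurable (M k)) (hXmeas : ∀ k i j, Measurable (X k i j))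
    (hindep : iIndepFun
      (m := fun a : ℕ ⊕ ℕ × ℕ × ℕ =>
        Sum.rec (motive := fun a => MeasurableSpace (Sum.elim (fun _ => ℕ) (fun _ => ℝ) a))
          (fun _ => inferInstanceAs (MeasurableSpace ℕ)) (fun _ => inferInstanceAs (MeasurableSpace ℝ)) a)
      (fun a : ℕ ⊕ ℕ × ℕ × ℕ =>
        Sum.rec (motive := fun a => Ω → Sum.elim (fun _ => ℕ) (fun _ => ℝ) a)
          (fun k => M k) (fun p => X p.1 p.2.1 p.2.2) a) μ) :
    (∀ k, μ (Fk M X d k) = μ (Ak M d k) * μ (Ck X d k)) ∧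
    (∀ k l, k ≠ l →
      μ (Fk M X d k ∩ Fk M X d l) = μ (Fk M X d k) * μ (Fk M X d l)) := by
  set mβ := (fun a : ℕ ⊕ ℕ × ℕ × ℕ =>
        Sum.rec (motive := fun a => MeasurableSpace (Sum.elim (fun _ => ℕ) (fun _ => ℝ) a))
          (fun _ => inferInstanceAs (MeasurableSpace ℕ))
          (fun _ => inferInstanceAs (MeasurableSpace ℝ)) a) with hmβ
  set fβ := (fun a : ℕ ⊕ ℕ × ℕ × ℕ =>
        Sum.rec (motive := fun a => Ω → Sum.elim (fun _ => ℕ) (fun _ => ℝ) a)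
          (fun k => M k) (fun p => X p.1 p.2.1 p.2.2) a) with hfβ
  set mm : (ℕ ⊕ ℕ × ℕ × ℕ) → MeasurableSpace Ω :=
    fun a => MeasurableSpace.comap (fβ a) (mβ a) with hmm
  have hiIndep : iIndep mm μ := (iIndepFun_iff_iIndep mβ fβ μ).mp hindep
  have h_le : ∀ a, mm a ≤ ‹MeasurableSpace Ω› := by
    intro a
    cases a with
    | inl k => exact (hMmeas k).comap_le
    | inr p => exact (hXmeas p.1 p.2.1 p.2.2).comap_le
  have hA_meas : ∀ k, MeasurableSet[mm (Sum.inl k)] (Ak M d k) := by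
    intro k
    exact ⟨({n | mnum d k < n} : Set ℕ), MeasurableSpace.measurableSet_top, rfl⟩
  have hE_meas : ∀ k i j, MeasurableSet[mm (Sum.inr (k, i, j))] (Ek X k i j) := by
    intro k i j
    exact ⟨(Ici (epsk k) : Set ℝ), (measurableSet_Ici : MeasurableSet (Ici (epsk k))), rfl⟩
  have hC_meas : ∀ k, MeasurableSet[⨆ a ∈ SX k, mm a] (Ck X d k) := by
    intro k
    refine measurableSet_Ck k (fun i => measurableSet_Dk k i (fun j => ?_))
    refine measurableSet_mono (le_biSup mm ?_) (hE_meas k i j)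
    exact ⟨(k, i, j), rfl, rfl⟩
  have hA_meas' : ∀ k, MeasurableSet[⨆ a ∈ SA k, mm a] (Ak M d k) := by
    intro k
    exact measurableSet_mono (le_biSup mm (Set.mem_singleton _)) (hA_meas k)
  have hF_meas : ∀ k, MeasurableSet[⨆ a ∈ SB k, mm a] (Fk M X d k) := by
    intro k
    have h1 : (⨆ a ∈ SA k, mm a) ≤ ⨆ a ∈ SB k, mm a :=
      biSup_mono (fun a ha => Set.mem_union_left _ ha)
    have h2 : (⨆ a ∈ SX k, mm a) ≤ ⨆ a ∈ SB k, mm a :=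
      biSup_mono (fun a ha => Set.mem_union_right _ ha)
    exact (measurableSet_mono h1 (hA_meas' k)).inter (measurableSet_mono h2 (hC_meas k))
  constructor
  · intro k
    have hIndepAC := indep_iSup_of_disjoint h_le hiIndep (disjoint_SA_SX k k)
    exact (Indep_iff _ _ _).mp hIndepAC _ _ (hA_meas' k) (hC_meas k)
  · intro k l hkl
    have hIndepBB := indep_iSup_of_disjoint h_le hiIndep (disjoint_SB k l hkl)
    exact (Indep_iff _ _ _).mp hIndepBB _ _ (hF_meas k) (hF_meas l)

end Indep
section Asymp

lemma tendsto_linear_decay {c : ℝ} (hc : 0 < c) :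
    Tendsto (fun y : ℝ => (y + 1) * Real.exp (-(c * y))) atTop (𝓝 0) := by
  have h1 : Tendsto (fun x : ℝ => x * Real.exp (-x)) atTop (𝓝 0) := by
    simpa using Real.tendsto_pow_mul_exp_neg_atTop_nhds_zero 1
  have hcy : Tendsto (fun y : ℝ => c * y) atTop atTop :=
    Tendsto.const_mul_atTop hc tendsto_id
  have h2 : Tendsto (fun y : ℝ => (c * y) * Real.exp (-(c * y))) atTop (𝓝 0) := h1.comp hcy
  have h3 : Tendsto (fun y : ℝ => Real.exp (-(c * y))) atTop (𝓝 0) :=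
    Real.tendsto_exp_neg_atTop_nhds_zero.comp hcy
  have h4 := (h2.const_mul (1/c)).add h3
  rw [mul_zero, zero_add] at h4
  refine h4.congr (fun y => ?_)
  field_simp

lemma mnum_le (d : ℝ) (hd : 0 < d) {k : ℕ} (hk : 1 ≤ k) :
    (mnum d k : ℝ) ≤ ((k:ℝ) - 1) * d / 2 := by
  have h1 : (1:ℝ) ≤ (k:ℝ) := by exact_mod_cast hk
  exact Nat.floor_le (by nlinarith)

lemma tendsto_Akbound (d : ℝ) (hd : 0 < d) :
    Tendsto (fun k : ℕ =>
      ((mnum d k : ℝ) + 1) * (2^(mnum d k) * Real.exp (-(((k:ℝ)-1)*d/2)))) atTop (𝓝 0) := by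
  have hc : 0 < 1 - Real.log 2 := by
    have := Real.log_two_lt_d9
    linarith
  set c := 1 - Real.log 2 with hcdef
  set y : ℕ → ℝ := fun k => ((k:ℝ)-1)*d/2 with hy
  have hytop : Tendsto y atTop atTop := by
    rw [hy]
    have h1 : Tendsto (fun k : ℕ => ((k:ℝ) - 1)) atTop atTop :=
      tendsto_atTop_add_const_right _ (-1) tendsto_natCast_atTop_atTop
    have h2 := h1.atTop_mul_const (by positivity : (0:ℝ) < d/2)
    refine h2.congr (fun k => by ring)
  have hg := (tendsto_linear_decay hc).comp hytop
  refine tendsto_of_tendsto_of_tendsto_of_le_of_le' tendsto_const_nhds hg ?_ ?_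
  · filter_upwards with k
    positivity
  · filter_upwards [eventually_ge_atTop 1] with k hk
    have hynn : 0 ≤ y k := by
      rw [hy]
      have h1 : (1:ℝ) ≤ (k:ℝ) := by exact_mod_cast hk
      have : 0 ≤ ((k:ℝ)-1) := by linarith
      positivity
    have hm : (mnum d k : ℝ) ≤ y k := mnum_le d hd hk
    have h2m : (2:ℝ)^(mnum d k) ≤ Real.exp (y k * Real.log 2) := by
      calc (2:ℝ)^(mnum d k) = Real.exp ((mnum d k : ℝ) * Real.log 2) := by
            rw [Real.exp_nat_mul, Real.exp_log (by norm_num)]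
      _ ≤ Real.exp (y k * Real.log 2) := by
            refine Real.exp_le_exp.mpr ?_
            refine mul_le_mul_of_nonneg_right hm (Real.log_nonneg (by norm_num))
    show ((mnum d k : ℝ) + 1) * (2^(mnum d k) * Real.exp (-(y k)))
        ≤ (fun z => (z + 1) * Real.exp (-(c * z))) (y k)
    simp only []
    have hrhs : (y k + 1) * Real.exp (-(c * y k))
        = (y k + 1) * (Real.exp (y k * Real.log 2) * Real.exp (-(y k))) := by
      rw [← Real.exp_add, hcdef]
      congr 2
      ring
    rw [hrhs]
    have hb1 : (0:ℝ) ≤ Real.exp (y k * Real.log 2) * Real.exp (-(y k)) := by positivity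
    refine mul_le_mul (by linarith) ?_ (by positivity) (by linarith)
    exact mul_le_mul_of_nonneg_right h2m (Real.exp_pos _).le

lemma eventually_mnum (d : ℝ) (hd : 0 < d) :
    ∀ᶠ k : ℕ in atTop, (k:ℝ) * d / 4 ≤ (mnum d k : ℝ) ∧ 1 ≤ mnum d k ∧ 2 ≤ k := by
  have h1 : Tendsto (fun k : ℕ => (k:ℝ)) atTop atTop := tendsto_natCast_atTop_atTop
  filter_upwards [h1.eventually_ge_atTop (2 + 4/d + 4/d), eventually_ge_atTop 2] with k hk hk2
  have hkd : (0:ℝ) < (k:ℝ) := by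
    have : (2:ℝ) ≤ (k:ℝ) := by exact_mod_cast hk2
    linarith
  have hfloor : ((k:ℝ)-1)*d/2 - 1 < (mnum d k : ℝ) := Nat.sub_one_lt_floor _
  have hd4 : 0 < 4/d := by positivity
  have hmain : (k:ℝ) * d / 4 ≤ ((k:ℝ)-1)*d/2 - 1 := by
    have h2 : (2 + 4/d : ℝ) ≤ (k:ℝ) := by linarith
    have h3 : (2 + 4/d)*d ≤ (k:ℝ)*d := by nlinarith
    have h4 : (4/d)*d = 4 := by field_simp
    nlinarith
  refine ⟨by linarith, ?_, hk2⟩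
  have hm1 : (1:ℝ) ≤ (mnum d k : ℝ) := by
    have h2 : (2 + 4/d + 4/d : ℝ) ≤ (k:ℝ) := hk
    have h3 : (4/d)*d = 4 := by field_simp
    nlinarith
  exact_mod_cast hm1

lemma sum_inv_sq_le {K : ℕ} (hK : 2 ≤ K) (n : ℕ) :
    ∑ k ∈ Finset.Icc K n, (1/(k:ℝ))^2 ≤ 1 := by
  have h2 : ∀ n : ℕ, 1 ≤ n → ∑ k ∈ Finset.Icc 2 n, (1/(k:ℝ))^2 ≤ 1 - 1/(n:ℝ) := by
    intro n hn
    induction n, hn using Nat.le_induction with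
    | base => simp
    | succ n hn ih =>
        rw [Finset.sum_Icc_succ_top (by omega)]
        have hnR : (1:ℝ) ≤ (n:ℝ) := by exact_mod_cast hn
        have h1 : (0:ℝ) < (n:ℝ) := by linarith
        have h2 : (0:ℝ) < (n:ℝ) + 1 := by linarith
        have key : (1/((n:ℝ)+1))^2 ≤ 1/(n:ℝ) - 1/((n:ℝ)+1) := by
          rw [div_sub_div _ _ (by linarith) (by linarith)]
          rw [div_pow, one_pow, div_le_div_iff₀ (by positivity) (by positivity)]
          ring_nf
          nlinarith
        push_cast
        linarith
  rcases le_or_gt K n with h | h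
  · have hn1 : 1 ≤ n := by omega
    have hsub : Finset.Icc K n ⊆ Finset.Icc 2 n := Finset.Icc_subset_Icc_left hK
    have hmono : ∑ k ∈ Finset.Icc K n, (1/(k:ℝ))^2 ≤ ∑ k ∈ Finset.Icc 2 n, (1/(k:ℝ))^2 :=
      Finset.sum_le_sum_of_subset_of_nonneg hsub (fun k _ _ => by positivity)
    have h3 := h2 n hn1
    have : (0:ℝ) < (n:ℝ) := by exact_mod_cast (by omega : 0 < n)
    have h4 : (0:ℝ) ≤ 1/(n:ℝ) := by positivity
    linarith
  · rw [Finset.Icc_eq_empty (by omega)]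
    norm_num

lemma harmonic_divergence {K : ℕ} (c : ℝ) (hc : 0 < c) :
    Tendsto (fun n => ∑ k ∈ Finset.Icc K n, c/(k:ℝ)) atTop atTop := by
  have hS : Tendsto (fun n => ∑ i ∈ Finset.range n, (1:ℝ)/(i+1)) atTop atTop :=
    Real.tendsto_sum_range_one_div_nat_succ_atTop
  have hH : Tendsto (fun n => ∑ k ∈ Finset.range (n+1), c/(k:ℝ)) atTop atTop := by
    have heq : ∀ n, ∑ k ∈ Finset.range (n+1), c/(k:ℝ) = c * ∑ i ∈ Finset.range n, (1:ℝ)/(i+1) := by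
      intro n
      rw [Finset.sum_range_succ']
      simp only [Nat.cast_zero, div_zero, add_zero, Finset.mul_sum]
      refine Finset.sum_congr rfl (fun i _ => ?_)
      push_cast
      field_simp
    refine Tendsto.congr (fun n => (heq n).symm) ?_
    exact Tendsto.const_mul_atTop hc hS
  have heq2 : ∀ᶠ n in atTop, ∑ k ∈ Finset.Icc K n, c/(k:ℝ)
      = ∑ k ∈ Finset.range (n+1), c/(k:ℝ) - ∑ k ∈ Finset.range K, c/(k:ℝ) := by
    filter_upwards [eventually_ge_atTop K] with n hn
    have hsplit : ∑ k ∈ Finset.range K, c/(k:ℝ) + ∑ k ∈ Finset.Ico K (n+1), c/(k:ℝ)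
        = ∑ k ∈ Finset.range (n+1), c/(k:ℝ) := by
      rw [Finset.range_eq_Ico, Finset.range_eq_Ico]
      exact Finset.sum_Ico_consecutive _ (by omega) (by omega)
    have hIcc : Finset.Icc K n = Finset.Ico K (n+1) := by
      ext x; simp [Nat.lt_succ_iff]
    rw [hIcc]
    linarith
  refine Tendsto.congr' (EventuallyEq.symm heq2) ?_
  exact tendsto_atTop_add_const_right _ _ hH

end Asymp
section Pointwise

variable {Ω : Type*} [MeasurableSpace Ω] {X : ℕ → ℕ → ℕ → Ω → ℝ} {M : ℕ → Ω → ℕ} {d : ℝ}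

lemma epsk_nonneg (k : ℕ) : 0 ≤ epsk k := by
  rw [epsk]
  positivity

lemma tsum_ge_of_Dk {k i : ℕ} {ω : Ω}
    (hnn : ∀ j, 0 ≤ X k i j ω) (hsum : Summable (fun j => X k i j ω))
    (hD : ω ∈ Dk X k i) : (c1 k : ℝ) * epsk k ≤ ∑' j, X k i j ω := by
  classical
  have h1 : ∑ j ∈ Finset.range k, X k i j ω ≤ ∑' j, X k i j ω :=
    Summable.sum_le_tsum _ (fun j _ => hnn j) hsum
  have hcnt : c1 k ≤ cnt (Finset.range k) (Ek X k i) ω := hD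
  have h2 : (c1 k : ℝ) * epsk k ≤ ∑ j ∈ Finset.range k, X k i j ω := by
    calc (c1 k:ℝ) * epsk k
        ≤ (cnt (Finset.range k) (Ek X k i) ω : ℝ) * epsk k := by
          refine mul_le_mul_of_nonneg_right ?_ (epsk_nonneg k)
          exact_mod_cast hcnt
    _ = ∑ j ∈ Finset.range k, (if ω ∈ Ek X k i j then epsk k else 0) := by
          rw [cnt]
          push_cast
          rw [Finset.sum_mul]
          refine Finset.sum_congr rfl (fun j _ => ?_)
          by_cases h : ω ∈ Ek X k i j <;> simp [h]
    _ ≤ ∑ j ∈ Finset.range k, X k i j ω := by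
          refine Finset.sum_le_sum (fun j _ => ?_)
          by_cases h : ω ∈ Ek X k i j
          · rw [if_pos h]; exact h
          · rw [if_neg h]; exact hnn j
  linarith

lemma sum_sq_ge {k : ℕ} {ω : Ω}
    (hnn : ∀ i j, 0 ≤ X k i j ω) (hsum : ∀ i, Summable (fun j => X k i j ω))
    (hF : ω ∈ Fk M X d k) :
    (c2 d k : ℝ) * ((c1 k : ℝ) * epsk k)^2
      ≤ ∑ i ∈ Finset.range (M k ω), (∑' j, X k i j ω)^2 := by
  classical
  obtain ⟨hA, hC⟩ := hF
  have hA' : mnum d k < M k ω := hA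
  have hC' : c2 d k ≤ cnt (Finset.range (mnum d k)) (Dk X k) ω := hC
  calc (c2 d k : ℝ) * ((c1 k : ℝ) * epsk k)^2
      ≤ (cnt (Finset.range (mnum d k)) (Dk X k) ω : ℝ) * ((c1 k : ℝ) * epsk k)^2 := by
        refine mul_le_mul_of_nonneg_right ?_ (sq_nonneg _)
        exact_mod_cast hC'
  _ = ∑ i ∈ Finset.range (mnum d k),
        (if ω ∈ Dk X k i then ((c1 k : ℝ) * epsk k)^2 else 0) := by
        rw [cnt]
        push_cast
        rw [Finset.sum_mul]
        refine Finset.sum_congr rfl (fun i _ => ?_)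
        by_cases h : ω ∈ Dk X k i <;> simp [h]
  _ ≤ ∑ i ∈ Finset.range (mnum d k), (∑' j, X k i j ω)^2 := by
        refine Finset.sum_le_sum (fun i _ => ?_)
        by_cases h : ω ∈ Dk X k i
        · rw [if_pos h]
          have := tsum_ge_of_Dk (hnn i) (hsum i) h
          have h0 : 0 ≤ (c1 k : ℝ) * epsk k := mul_nonneg (by positivity) (epsk_nonneg k)
          exact pow_le_pow_left₀ h0 this 2
        · rw [if_neg h]; exact sq_nonneg _
  _ ≤ ∑ i ∈ Finset.range (M k ω), (∑' j, X k i j ω)^2 := by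
        refine Finset.sum_le_sum_of_subset_of_nonneg ?_ (fun i _ _ => sq_nonneg _)
        exact Finset.range_subset_range.mpr (by omega)

lemma numeric_lower (hd : 0 < d) {k : ℕ} (hk : 2 ≤ k)
    (hm : (k:ℝ) * d / 4 ≤ (mnum d k : ℝ)) :
    min (d/4096) 1 / (k:ℝ) ≤ (c2 d k : ℝ) * ((c1 k : ℝ) * epsk k)^2 := by
  have hkR : (2:ℝ) ≤ (k:ℝ) := by exact_mod_cast hk
  have hkpos : (0:ℝ) < (k:ℝ) := by linarith
  have he : epsk k = 1/(4*(k:ℝ)^2) := rfl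
  have hc1 : (k:ℝ)/4 ≤ (c1 k : ℝ) := by
    have h4 : k ≤ 4 * c1 k := by unfold c1; omega
    have h4' : (k:ℝ) ≤ 4 * (c1 k : ℝ) := by exact_mod_cast h4
    linarith
  have hc2 : (mnum d k : ℝ)/4 ≤ (c2 d k : ℝ) := by
    have h4 : mnum d k ≤ 4 * c2 d k := by unfold c2; omega
    have h4' : (mnum d k:ℝ) ≤ 4 * (c2 d k : ℝ) := by exact_mod_cast h4
    linarith
  have he1 : ((k:ℝ)/4) * (1/(4*(k:ℝ)^2)) = 1/(16*(k:ℝ)) := by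
    field_simp
    ring
  have hstep1 : min (d/4096) 1 / (k:ℝ) ≤ d/(4096*(k:ℝ)) := by
    rw [div_le_div_iff₀ hkpos (by positivity)]
    have := min_le_left (d/4096) 1
    nlinarith
  refine hstep1.trans ?_
  calc d/(4096*(k:ℝ)) = ((k:ℝ)*d/16) * (1/(16*(k:ℝ)))^2 := by
        field_simp
        ring
  _ ≤ ((mnum d k : ℝ)/4) * (1/(16*(k:ℝ)))^2 := by
        refine mul_le_mul_of_nonneg_right (by linarith) (by positivity)
  _ ≤ (c2 d k : ℝ) * (1/(16*(k:ℝ)))^2 := by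
        refine mul_le_mul_of_nonneg_right hc2 (by positivity)
  _ = (c2 d k : ℝ) * (((k:ℝ)/4) * (1/(4*(k:ℝ)^2)))^2 := by rw [he1]
  _ ≤ (c2 d k : ℝ) * ((c1 k : ℝ) * epsk k)^2 := by
        refine mul_le_mul_of_nonneg_left ?_ (Nat.cast_nonneg _)
        refine pow_le_pow_left₀ (by positivity) ?_ 2
        rw [he]
        refine mul_le_mul_of_nonneg_right hc1 (by positivity)

end Pointwise
end SSLL

open SSLL

/-- Theorem 1 (core): with `M_k` independent Poisson of parameter `(k-1)(t-s)` and
`T_{ik} = ∑_{j≥0} X_{k,i,j}` sums of independent exponentials of rates `C(k+j,2)`, all the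
variables being mutually independent, the sum `∑_{k≥2} ∑_{i<M_k} T_{ik}²` is a.s. infinite. -/
theorem sum_squared_life_lengths_infinite {Ω : Type*} [MeasurableSpace Ω]
    (μ : Measure Ω) [IsProbabilityMeasure μ]
    (s t : ℝ) (hst : s < t)
    (M : ℕ → Ω → ℕ) (X : ℕ → ℕ → ℕ → Ω → ℝ)
    (hMmeas : ∀ k, Measurable (M k)) (hXmeas : ∀ k i j, Measurable (X k i j))
    (hindep : iIndepFun
      (m := fun a : ℕ ⊕ ℕ × ℕ × ℕ =>
        Sum.rec (motive := fun a => MeasurableSpace (Sum.elim (fun _ => ℕ) (fun _ => ℝ) a))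
          (fun _ => inferInstanceAs (MeasurableSpace ℕ)) (fun _ => inferInstanceAs (MeasurableSpace ℝ)) a)
      (fun a : ℕ ⊕ ℕ × ℕ × ℕ =>
        Sum.rec (motive := fun a => Ω → Sum.elim (fun _ => ℕ) (fun _ => ℝ) a)
          (fun k => M k) (fun p => X p.1 p.2.1 p.2.2) a) μ)
    (hMdist : ∀ k, 2 ≤ k →
      Measure.map (M k) μ = poissonMeasure (((k : ℝ) - 1) * (t - s)).toNNReal)
    (hXdist : ∀ k, 2 ≤ k → ∀ i j,
      Measure.map (X k i j) μ = expMeasure ((k + j).choose 2)) :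
    ∀ᵐ ω ∂μ, Tendsto
      (fun n => ∑ k ∈ Finset.Icc 2 n,
        ∑ i ∈ Finset.range (M k ω), (∑' j : ℕ, X k i j ω) ^ 2) atTop atTop := by
  classical
  set d : ℝ := t - s with hddef
  have hd : 0 < d := by rw [hddef]; linarith
  set δ : ℝ := min (d/4096) 1 with hδdef
  have hδ : 0 < δ := by
    rw [hδdef]
    refine lt_min (by positivity) (by norm_num)
  set a : ℕ → ℝ := fun k => δ / (k:ℝ) with hadef
  obtain ⟨hprod, hpair⟩ := indep_main M X (d := d) hMmeas hXmeas hindep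
  -- choose the threshold K
  have hev2 := (tendsto_Akbound d hd).eventually_lt_const (by norm_num : (0:ℝ) < 1/2)
  obtain ⟨K0, hK0⟩ := eventually_atTop.mp ((eventually_mnum d hd).and hev2)
  set K : ℕ := max K0 2 with hKdef
  have hK2 : 2 ≤ K := le_max_right _ _
  have hKprop : ∀ k, K ≤ k → ((k:ℝ) * d / 4 ≤ (mnum d k : ℝ) ∧ 1 ≤ mnum d k ∧ 2 ≤ k) ∧
      ((mnum d k : ℝ) + 1) * (2^(mnum d k) * Real.exp (-(((k:ℝ)-1)*d/2))) < 1/2 :=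
    fun k hk => hK0 k (le_trans (le_max_left _ _) hk)
  -- probability lower bound for F k
  have hp : ∀ k, K ≤ k → ENNReal.ofReal (1/10) ≤ μ (Fk M X d k) := by
    intro k hk
    obtain ⟨⟨hm4, hm1, hk2⟩, hbound⟩ := hKprop k hk
    have hprob : ∀ {A : Set Ω}, MeasurableSet A → ∀ {x : ℝ}, 0 ≤ x → x ≤ 1 →
        μ Aᶜ ≤ ENNReal.ofReal (1 - x) → ENNReal.ofReal x ≤ μ A := by
      intro A hA x hx0 hx1 h
      have hsum : μ A + μ Aᶜ = 1 := by
        rw [measure_add_measure_compl hA, measure_univ]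
      have h1 : ENNReal.ofReal x = 1 - ENNReal.ofReal (1 - x) := by
        rw [← ENNReal.ofReal_one, ← ENNReal.ofReal_sub _ (by linarith)]
        norm_num
      rw [h1]
      calc (1:ℝ≥0∞) - ENNReal.ofReal (1-x) ≤ 1 - μ Aᶜ := tsub_le_tsub_left h 1
      _ ≤ μ A := by
          rw [tsub_le_iff_right]
          rw [hsum]
    have hA : ENNReal.ofReal (1/2) ≤ μ (Ak M d k) := by
      refine hprob (measurableSet_Ak hMmeas k) (by norm_num) (by norm_num) ?_
      refine (meas_Ak_compl_le hMmeas hMdist hd hk2).trans ?_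
      refine ENNReal.ofReal_le_ofReal ?_
      norm_num
      linarith
    have hC : ENNReal.ofReal (1/5) ≤ μ (Ck X d k) := by
      refine hprob (measurableSet_Ck' hXmeas k) (by norm_num) (by norm_num) ?_
      refine (meas_Ck_compl_le hXmeas hXdist hk2 hm1).trans ?_
      refine ENNReal.ofReal_le_ofReal ?_
      norm_num
    calc ENNReal.ofReal (1/10) = ENNReal.ofReal (1/2) * ENNReal.ofReal (1/5) := by
          rw [← ENNReal.ofReal_mul (by norm_num)]
          norm_num
    _ ≤ μ (Ak M d k) * μ (Ck X d k) := mul_le_mul' hA hC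
    _ = μ (Fk M X d k) := (hprod k).symm
  -- apply the abstract divergence lemma
  have ha : ∀ k, 0 ≤ a k := by
    intro k
    rw [hadef]
    positivity
  have ha2 : ∀ n, ∑ k ∈ Finset.Icc K n, (a k)^2 ≤ 1 := by
    intro n
    refine le_trans (Finset.sum_le_sum (fun k hk => ?_)) (sum_inv_sq_le hK2 n)
    rw [hadef]
    have hk2 : 2 ≤ k := le_trans hK2 (Finset.mem_Icc.mp hk).1
    have hkpos : (0:ℝ) < (k:ℝ) := by exact_mod_cast (by omega : 0 < k)
    have hδ1 : δ ≤ 1 := min_le_right _ _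
    have hle : δ / (k:ℝ) ≤ 1 / (k:ℝ) := by
      rw [div_le_div_iff₀ hkpos hkpos]
      nlinarith
    have h1k : (0:ℝ) ≤ 1/(k:ℝ) := by positivity
    have hδk : (0:ℝ) ≤ δ/(k:ℝ) := by positivity
    nlinarith
  have hdiv : Tendsto (fun n => ∑ k ∈ Finset.Icc K n, a k) atTop atTop :=
    harmonic_divergence δ hδ
  have habs := divergence_abstract μ K (Fk M X d) (measurableSet_Fk hMmeas hXmeas) a ha ha2 hp
    (fun k l hkl => hpair k l hkl) hdiv
  -- combine with the good sets
  filter_upwards [habs, ae_nonneg X hXmeas hXdist, ae_summable X hXmeas hXdist]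
    with ω hV hnn hsm
  refine tendsto_atTop_mono ?_ hV
  intro n
  have hstep1 : ∀ k ∈ Finset.Icc K n, (Fk M X d k).indicator (fun _ => a k) ω
      ≤ ∑ i ∈ Finset.range (M k ω), (∑' j, X k i j ω)^2 := by
    intro k hk
    have hkK : K ≤ k := (Finset.mem_Icc.mp hk).1
    obtain ⟨⟨hm4, hm1, hk2⟩, -⟩ := hKprop k hkK
    by_cases hω : ω ∈ Fk M X d k
    · rw [Set.indicator_of_mem hω]
      have hnn' : ∀ i j, 0 ≤ X k i j ω := fun i j => hnn k i j hk2
      have hsum' : ∀ i, Summable (fun j => X k i j ω) :=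
        fun i => hsm k hk2 i (fun j => hnn k i j hk2)
      refine le_trans ?_ (sum_sq_ge hnn' hsum' hω)
      exact numeric_lower hd hk2 hm4
    · rw [Set.indicator_of_notMem hω]
      exact Finset.sum_nonneg (fun i _ => sq_nonneg _)
  calc ∑ k ∈ Finset.Icc K n, (Fk M X d k).indicator (fun _ => a k) ω
      ≤ ∑ k ∈ Finset.Icc K n, ∑ i ∈ Finset.range (M k ω), (∑' j, X k i j ω)^2 :=
        Finset.sum_le_sum hstep1
  _ ≤ ∑ k ∈ Finset.Icc 2 n, ∑ i ∈ Finset.range (M k ω), (∑' j, X k i j ω)^2 := by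
        refine Finset.sum_le_sum_of_subset_of_nonneg (Finset.Icc_subset_Icc_left hK2) ?_
        exact fun k _ _ => Finset.sum_nonneg (fun i _ => sq_nonneg _)
end
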